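/- Let α be an ideal of a commutative Noetherian ring A and γ an ideal with γ ⊄ α. Then every associated prime of the colon ideal (α : γ) is an associated prime of α. -/

import Mathlib

/-- Every associated prime of the colon ideal (α : γ) is an associated prime of α,
for ideals of a Noetherian ring with γ ⊄ α. -/
theorem associatedPrimes_colon_subset {A : Type*} [CommRing A] [IsNoetherianRing A]
    (α γ : Ideal A) (hγ : ¬ γ ≤ α) (p : Ideal A)
    (hp : p ∈ associatedPrimes A (A ⧸ (α.colon γ))) :
    p ∈ associatedPrimes A (A ⧸ α) := by
  obtain ⟨hprime, x, hx⟩ := isAssociatedPrime_iff.mp hp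
  obtain ⟨a, rfl⟩ := Ideal.Quotient.mk_surjective x
  -- γ is finitely generated
  obtain ⟨s, hs⟩ := (isNoetherianRing_iff_ideal_fg A).mp ‹_› γ
  set f : A → Ideal A := fun g =>
    (Submodule.span A {Ideal.Quotient.mk α (a * g)}).annihilator with hf
  have key : ∀ y g, y ∈ f g ↔ y * (a * g) ∈ α := by
    intro y g
    rw [hf]
    simp only [Submodule.mem_annihilator_span_singleton]
    rw [show y • (Ideal.Quotient.mk α (a * g)) = Ideal.Quotient.mk α (y * (a * g)) from rfl,
      Ideal.Quotient.eq_zero_iff_mem]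
  have hxmem : ∀ y, y ∈ p ↔ y * a ∈ α.colon γ := by
    intro y
    rw [hx, Submodule.mem_colon_singleton, Submodule.mem_bot,
      show y • (Ideal.Quotient.mk (α.colon γ) a) = Ideal.Quotient.mk (α.colon γ) (y * a) from rfl,
      Ideal.Quotient.eq_zero_iff_mem]
  have hpinf : p = s.inf f := by
    apply le_antisymm
    · refine Finset.le_inf fun g hg => fun y hy => ?_
      rw [key]
      have := (hxmem y).mp hy
      rw [Submodule.mem_colon] at this
      have hgγ : g ∈ γ := hs ▸ Ideal.subset_span hg
      simpa [mul_assoc, smul_eq_mul] using this g hgγ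
    · intro y hy
      rw [hxmem, Submodule.mem_colon]
      intro z hz
      have hzle : γ ≤ α.colon (Ideal.span {y * a}) := by
        rw [← hs, Ideal.span_le]
        intro g hg
        have := (key y g).mp ((Finset.inf_le hg : s.inf f ≤ f g) hy)
        rw [SetLike.mem_coe, Submodule.mem_colon]
        intro w hw
        rw [SetLike.mem_coe, Ideal.mem_span_singleton] at hw
        obtain ⟨c, rfl⟩ := hw
        have : g * (y * a) ∈ α := by
          rw [show g * (y * a) = y * (a * g) by ring]; exact this
        simpa [smul_eq_mul, mul_assoc, mul_comm, mul_left_comm] using α.mul_mem_right c this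
      have := hzle hz
      rw [Submodule.mem_colon] at this
      have := this (y * a) (Ideal.mem_span_singleton_self _)
      simpa [smul_eq_mul, mul_comm] using this
  obtain ⟨g, hgs, hgle⟩ := hprime.inf_le'.mp hpinf.ge
  exact isAssociatedPrime_iff.mpr ⟨hprime, Ideal.Quotient.mk α (a * g), by
    have h := le_antisymm (hpinf.le.trans (Finset.inf_le hgs)) hgle
    ext y
    rw [h, key, Submodule.mem_colon_singleton, Submodule.mem_bot,
      show y • (Ideal.Quotient.mk α (a * g)) = Ideal.Quotient.mk α (y * (a * g)) from rfl,
      Ideal.Quotient.eq_zero_iff_mem]⟩
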